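/- arXiv:1107.2105 — 4 statements merged into one kernel-verified Lean document; each statement's English description precedes it below -/
import Mathlib

section
/- (Necessity direction of Lemma 1.) Every optimal feasible solution of the energy-minimization convex program satisfies properties (P2)–(P5). -/
open Finset

/-- A feasible solution of the energy-minimization convex program:
speeds `s i > 0`, times `t i j ≥ 0`, `t i j = 0` for jobs not alive in interval `j`,
each job gets enough processing time `w i / s i`, the machine capacity
`min m (a j) * |I j|` is respected in each interval, and `t i j ≤ |I j|`. -/
def EFeasible {n L : ℕ} (m : ℕ) (w : Fin n → ℝ) (len : Fin L → ℝ)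
    (Alive : Fin n → Fin L → Bool)
    (s : Fin n → ℝ) (t : Fin n → Fin L → ℝ) : Prop :=
  (∀ i, 0 < s i) ∧
  (∀ i j, 0 ≤ t i j) ∧
  (∀ i j, ¬ Alive i j → t i j = 0) ∧
  (∀ i, w i / s i ≤ ∑ j ∈ univ.filter (fun j => Alive i j), t i j) ∧
  (∀ j, ∑ i ∈ univ.filter (fun i => Alive i j), t i j
      ≤ ((min m (univ.filter (fun i => Alive i j)).card : ℕ) : ℝ) * len j) ∧
  (∀ i j, t i j ≤ len j)

/-- The energy `∑ i, w i * s i ^ (α - 1)` of a solution. -/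
noncomputable def Energy {n : ℕ} (α : ℝ) (w s : Fin n → ℝ) : ℝ :=
  ∑ i, w i * s i ^ (α - 1)

/-- (P2): if `i` is alive in `j` with `t i j = 0`, then `s i ≤ s k` for every
`k` alive in `j` with `t k j > 0`. -/
def P2 {n L : ℕ} (Alive : Fin n → Fin L → Bool) (s : Fin n → ℝ)
    (t : Fin n → Fin L → ℝ) : Prop :=
  ∀ i j, Alive i j → t i j = 0 → ∀ k, Alive k j → 0 < t k j → s i ≤ s k

/-- (P3): if `t i j = |I j|`, then `s i ≥ s k` for every `k` alive in `j`
with `t k j < |I j|`. -/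
def P3 {n L : ℕ} (len : Fin L → ℝ) (Alive : Fin n → Fin L → Bool) (s : Fin n → ℝ)
    (t : Fin n → Fin L → ℝ) : Prop :=
  ∀ i j, Alive i j → t i j = len j → ∀ k, Alive k j → t k j < len j → s k ≤ s i

/-- (P4): any two jobs alive in `j` with `0 < t · j < |I j|` have equal speeds. -/
def P4 {n L : ℕ} (len : Fin L → ℝ) (Alive : Fin n → Fin L → Bool) (s : Fin n → ℝ)
    (t : Fin n → Fin L → ℝ) : Prop :=
  ∀ i k j, Alive i j → Alive k j → 0 < t i j → t i j < len j →
    0 < t k j → t k j < len j → s i = s k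

/-- (P5): if `a j ≤ m`, then `t i j = |I j|` for every job `i` alive in `j`. -/
def P5 {n L : ℕ} (m : ℕ) (len : Fin L → ℝ) (Alive : Fin n → Fin L → Bool)
    (t : Fin n → Fin L → ℝ) : Prop :=
  ∀ j, (univ.filter (fun i => Alive i j)).card ≤ m → ∀ i, Alive i j → t i j = len j

open Filter Topology

lemma sum_lt_sum_two {n : ℕ} (f g : Fin n → ℝ) {i k : Fin n} (hik : i ≠ k)
    (hoff : ∀ l, l ≠ i → l ≠ k → f l = g l) (hpair : f i + f k < g i + g k) :
    ∑ l, f l < ∑ l, g l := by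
  classical
  have hmem : k ∈ univ.erase i := Finset.mem_erase.mpr ⟨Ne.symm hik, mem_univ k⟩
  rw [← Finset.add_sum_erase _ f (mem_univ i), ← Finset.add_sum_erase _ g (mem_univ i),
      ← Finset.add_sum_erase _ f hmem, ← Finset.add_sum_erase _ g hmem]
  have heq : ∑ l ∈ (univ.erase i).erase k, f l = ∑ l ∈ (univ.erase i).erase k, g l :=
    Finset.sum_congr rfl (fun l hl => hoff l
      (Finset.ne_of_mem_erase (Finset.mem_of_mem_erase hl)) (Finset.ne_of_mem_erase hl))
  linarith

lemma sum_lt_sum_one {n : ℕ} (f g : Fin n → ℝ) {i : Fin n}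
    (hoff : ∀ l, l ≠ i → f l = g l) (hi : f i < g i) :
    ∑ l, f l < ∑ l, g l := by
  classical
  rw [← Finset.add_sum_erase _ f (mem_univ i), ← Finset.add_sum_erase _ g (mem_univ i)]
  have heq : ∑ l ∈ univ.erase i, f l = ∑ l ∈ univ.erase i, g l :=
    Finset.sum_congr rfl (fun l hl => hoff l (Finset.ne_of_mem_erase hl))
  linarith

lemma exists_small_decrease {Ti Tk wi wk α : ℝ} (hTi : 0 < Ti) (hTk : 0 < Tk)
    (hwi : 0 < wi) (hwk : 0 < wk) (hα : 1 < α)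
    (hs : wk / Tk < wi / Ti) {δ : ℝ} (hδ : 0 < δ) :
    ∃ ε : ℝ, 0 < ε ∧ ε < δ ∧
      wi * (wi / (Ti + ε)) ^ (α - 1) + wk * (wk / (Tk - ε)) ^ (α - 1)
        < wi * (wi / Ti) ^ (α - 1) + wk * (wk / Tk) ^ (α - 1) := by
  set h : ℝ → ℝ := fun ε => wi * (wi / (Ti + ε)) ^ (α - 1) + wk * (wk / (Tk - ε)) ^ (α - 1)
    with hh
  have h1 : HasDerivAt (fun ε : ℝ => Ti + ε) 1 0 := (hasDerivAt_id 0).const_add Ti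
  have h2 : HasDerivAt (fun ε : ℝ => Tk - ε) (-1) 0 := (hasDerivAt_id 0).const_sub Tk
  have hne1 : Ti + (0:ℝ) ≠ 0 := by linarith
  have hne2 : Tk - (0:ℝ) ≠ 0 := by simp; linarith
  have d1 := ((hasDerivAt_const (0:ℝ) wi).div h1 hne1).rpow_const
      (p := α - 1) (Or.inl (by show wi / (Ti + 0) ≠ 0; rw [add_zero]; positivity))
  have d2 := ((hasDerivAt_const (0:ℝ) wk).div h2 hne2).rpow_const
      (p := α - 1) (Or.inl (by show wk / (Tk - 0) ≠ 0; rw [sub_zero]; positivity))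
  have D := (d1.const_mul wi).add (d2.const_mul wk)
  have e1 : ∀ x T : ℝ, 0 < x → 0 < T →
      x * ((0 * (T + 0) - x * 1) / (T + 0) ^ 2 * (α - 1) * (x / (T + 0)) ^ (α - 1 - 1))
        = -((α - 1) * (x / T) ^ α) := by
    intro x T hx hT
    have hk : (x / T) ^ (α - 1 - 1) * ((x:ℝ) / T) ^ (2:ℕ) = (x / T) ^ α := by
      rw [← Real.rpow_natCast (x/T) 2, ← Real.rpow_add (by positivity)]
      congr 1; ring
    rw [div_pow] at hk
    rw [add_zero]
    linear_combination (-(α - 1)) * hk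
  have e2 : ∀ x T : ℝ, 0 < x → 0 < T →
      x * ((0 * (T - 0) - x * (-1)) / (T - 0) ^ 2 * (α - 1) * (x / (T - 0)) ^ (α - 1 - 1))
        = (α - 1) * (x / T) ^ α := by
    intro x T hx hT
    have hk : (x / T) ^ (α - 1 - 1) * ((x:ℝ) / T) ^ (2:ℕ) = (x / T) ^ α := by
      rw [← Real.rpow_natCast (x/T) 2, ← Real.rpow_add (by positivity)]
      congr 1; ring
    rw [div_pow] at hk
    rw [sub_zero]
    linear_combination (α - 1) * hk
  change HasDerivAt h (wi * ((0 * (Ti + 0) - wi * 1) / (Ti + 0) ^ 2 * (α - 1) * (wi / (Ti + 0)) ^ (α - 1 - 1)) + wk * ((0 * (Tk - 0) - wk * -1) / (Tk - 0) ^ 2 * (α - 1) * (wk / (Tk - 0)) ^ (α - 1 - 1))) 0 at D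
  rw [e1 wi Ti hwi hTi, e2 wk Tk hwk hTk] at D
  have hDneg : -((α - 1) * (wi / Ti) ^ α) + (α - 1) * (wk / Tk) ^ α < 0 := by
    have hr : (wk / Tk) ^ α < (wi / Ti) ^ α :=
      Real.rpow_lt_rpow (le_of_lt (div_pos hwk hTk)) hs (by linarith)
    nlinarith
  rw [hasDerivAt_iff_tendsto_slope] at D
  have h0 := D.eventually (gt_mem_nhds hDneg)
  have h0' : ∀ᶠ ε in 𝓝[>] (0:ℝ), slope h 0 ε < 0 :=
    h0.filter_mono (nhdsWithin_mono 0 (fun x hx => ne_of_gt hx))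
  have h1' : ∀ᶠ ε in 𝓝[>] (0:ℝ), ε < δ := by
    filter_upwards [Ioo_mem_nhdsGT_of_mem
      (by constructor <;> simp [hδ, le_refl] : (0:ℝ) ∈ Set.Ico (0:ℝ) δ)] with ε hε
    exact hε.2
  have h2' : ∀ᶠ ε in 𝓝[>] (0:ℝ), (0:ℝ) < ε := eventually_mem_nhdsWithin
  obtain ⟨ε, hsl, hεδ, hεpos⟩ := (h0'.and (h1'.and h2')).exists
  refine ⟨ε, hεpos, hεδ, ?_⟩
  rw [slope_def_field, sub_zero, div_lt_iff₀ hεpos, zero_mul, sub_neg] at hsl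
  have h00 : h 0 = wi * (wi / Ti) ^ (α - 1) + wk * (wk / Tk) ^ (α - 1) := by
    simp [hh]
  calc wi * (wi / (Ti + ε)) ^ (α - 1) + wk * (wk / (Tk - ε)) ^ (α - 1) = h ε := rfl
    _ < h 0 := hsl
    _ = _ := h00

theorem aux_key_and_P5 {n L : ℕ} (m : ℕ) (α : ℝ)
    (w : Fin n → ℝ) (len : Fin L → ℝ) (Alive : Fin n → Fin L → Bool)
    (hα : 1 < α) (hw : ∀ i, 0 < w i)
    (s : Fin n → ℝ) (t : Fin n → Fin L → ℝ)
    (hfeas : EFeasible m w len Alive s t)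
    (hopt : ∀ s' t', EFeasible m w len Alive s' t' → Energy α w s ≤ Energy α w s') :
    (∀ j i k, Alive i j → Alive k j → t i j < len j → 0 < t k j → s i ≤ s k) ∧
    (∀ j, (univ.filter (fun i => Alive i j)).card ≤ m → ∀ i, Alive i j → t i j = len j) := by
  classical
  have hdd : ∀ a b : ℝ, 0 < a → 0 < b → a / (a / b) = b := by
    intro a b ha hb; field_simp
  obtain ⟨hspos, htnn, hdead, hwork, hcap, htlen⟩ := hfeas
  set T : Fin n → ℝ := fun i => ∑ j ∈ univ.filter (fun j => Alive i j), t i j with hT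
  have hTpos : ∀ i, 0 < T i := fun i =>
    lt_of_lt_of_le (div_pos (hw i) (hspos i)) (hwork i)
  -- tightness
  have htight : ∀ i, w i / s i = T i := by
    intro i
    by_contra hne
    have hlt : w i / s i < T i := lt_of_le_of_ne (hwork i) hne
    have hsi' : w i / T i < s i := by
      rw [div_lt_iff₀ (hTpos i)]
      rw [div_lt_iff₀ (hspos i)] at hlt
      linarith [hlt]
    set s' : Fin n → ℝ := Function.update s i (w i / T i) with hs'
    have hfeas' : EFeasible m w len Alive s' t := by
      refine ⟨?_, htnn, hdead, ?_, hcap, htlen⟩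
      · intro l
        rcases eq_or_ne l i with hl | hl
        · rw [hl, hs', Function.update_self]; exact div_pos (hw i) (hTpos i)
        · rw [hs', Function.update_of_ne hl]; exact hspos l
      · intro l
        rcases eq_or_ne l i with hl | hl
        · rw [hl, hs', Function.update_self, hdd (w i) (T i) (hw i) (hTpos i)]
        · rw [hs', Function.update_of_ne hl]; exact hwork l
    have hE : Energy α w s' < Energy α w s := by
      unfold Energy
      refine sum_lt_sum_one (fun l => w l * s' l ^ (α - 1)) (fun l => w l * s l ^ (α - 1)) (i := i) ?_ ?_
      · intro l hl; rw [hs', Function.update_of_ne hl]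
      · rw [hs', Function.update_self]
        have hb : (w i / T i) ^ (α - 1) < s i ^ (α - 1) :=
          Real.rpow_lt_rpow (le_of_lt (div_pos (hw i) (hTpos i))) hsi' (by linarith)
        exact mul_lt_mul_of_pos_left hb (hw i)
    linarith [hopt s' t hfeas']
  have hsval : ∀ i, s i = w i / T i := by
    intro i
    rw [← htight i, hdd (w i) (s i) (hw i) (hspos i)]
  constructor
  · -- key exchange property
    intro j i k hAi hAk hti htk
    rcases eq_or_ne i k with hik | hik
    · rw [hik]
    by_contra hgt
    push_neg at hgt
    have hki : k ≠ i := Ne.symm hik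
    have hs2 : w k / T k < w i / T i := by rw [← hsval i, ← hsval k]; exact hgt
    have hδpos : 0 < min (t k j) (len j - t i j) := lt_min htk (by linarith)
    obtain ⟨ε, hε0, hεδ, hdec⟩ :=
      exists_small_decrease (hTpos i) (hTpos k) (hw i) (hw k) hα hs2 hδpos
    have hε1 : ε < t k j := lt_of_lt_of_le hεδ (min_le_left _ _)
    have hε2 : ε < len j - t i j := lt_of_lt_of_le hεδ (min_le_right _ _)
    have hjmem : ∀ l : Fin n, Alive l j → j ∈ univ.filter (fun j' => Alive l j') :=
      fun l hl => Finset.mem_filter.mpr ⟨mem_univ j, hl⟩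
    have htkT : t k j ≤ T k :=
      Finset.single_le_sum (fun j' _ => htnn k j') (hjmem k hAk)
    have hTkε : 0 < T k - ε := by linarith
    have hTiε : 0 < T i + ε := by linarith [hTpos i]
    set t' : Fin n → Fin L → ℝ := fun l j' =>
      if j' = j then (if l = i then t i j + ε else if l = k then t k j - ε else t l j')
      else t l j' with ht'
    set s' : Fin n → ℝ := fun l =>
      if l = i then w i / (T i + ε) else if l = k then w k / (T k - ε) else s l with hs'
    have hs'i : s' i = w i / (T i + ε) := by simp [hs']
    have hs'k : s' k = w k / (T k - ε) := by simp [hs', hki]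
    have hs'o : ∀ l, l ≠ i → l ≠ k → s' l = s l := by
      intro l h1 h2; simp [hs', h1, h2]
    have ht'i : ∀ j', t' i j' = t i j' + (if j' = j then ε else 0) := by
      intro j'
      rcases eq_or_ne j' j with hj | hj
      · rw [hj]; simp [ht']
      · simp [ht', hj]
    have ht'k : ∀ j', t' k j' = t k j' + (if j' = j then -ε else 0) := by
      intro j'
      rcases eq_or_ne j' j with hj | hj
      · rw [hj]; simp [ht', hki]; ring
      · simp [ht', hj]
    have ht'o : ∀ l j', l ≠ i → l ≠ k → t' l j' = t l j' := by
      intro l j' h1 h2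
      rcases eq_or_ne j' j with hj | hj
      · rw [hj]; simp [ht', h1, h2]
      · simp [ht', hj]
    have hsumi : ∑ j' ∈ univ.filter (fun j' => Alive i j'), t' i j' = T i + ε := by
      rw [Finset.sum_congr rfl (fun j' _ => ht'i j'), Finset.sum_add_distrib,
        Finset.sum_ite_eq' _ j (fun _ => ε), if_pos (hjmem i hAi)]
    have hsumk : ∑ j' ∈ univ.filter (fun j' => Alive k j'), t' k j' = T k - ε := by
      rw [Finset.sum_congr rfl (fun j' _ => ht'k j'), Finset.sum_add_distrib,
        Finset.sum_ite_eq' _ j (fun _ => -ε), if_pos (hjmem k hAk)]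
      ring
    have hfeas' : EFeasible m w len Alive s' t' := by
      refine ⟨?_, ?_, ?_, ?_, ?_, ?_⟩
      · intro l
        rcases eq_or_ne l i with hl | hl
        · rw [hl, hs'i]; exact div_pos (hw i) hTiε
        rcases eq_or_ne l k with hl' | hl'
        · rw [hl', hs'k]; exact div_pos (hw k) hTkε
        · rw [hs'o l hl hl']; exact hspos l
      · intro l j'
        rcases eq_or_ne l i with hl | hl
        · rw [hl, ht'i j']
          have := htnn i j'
          split_ifs <;> linarith
        rcases eq_or_ne l k with hl' | hl'
        · rw [hl', ht'k j']
          have h1 := htnn k j'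
          split_ifs with hc
          · rw [hc]; linarith
          · linarith
        · rw [ht'o l j' hl hl']; exact htnn l j'
      · intro l j' hA
        rcases eq_or_ne l i with hl | hl
        · rcases eq_or_ne j' j with hj | hj
          · exfalso; rw [hl, hj] at hA; exact hA hAi
          · rw [hl, ht'i j', if_neg hj, add_zero]
            exact hdead i j' (by rw [← hl]; exact hA)
        rcases eq_or_ne l k with hl' | hl'
        · rcases eq_or_ne j' j with hj | hj
          · exfalso; rw [hl', hj] at hA; exact hA hAk
          · rw [hl', ht'k j', if_neg hj, add_zero]
            exact hdead k j' (by rw [← hl']; exact hA)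
        · rw [ht'o l j' hl hl']; exact hdead l j' hA
      · intro l
        rcases eq_or_ne l i with hl | hl
        · rw [hl, hsumi, hs'i, hdd (w i) (T i + ε) (hw i) hTiε]
        rcases eq_or_ne l k with hl' | hl'
        · rw [hl', hsumk, hs'k, hdd (w k) (T k - ε) (hw k) hTkε]
        · rw [Finset.sum_congr rfl (fun j' _ => ht'o l j' hl hl'), hs'o l hl hl']
          exact hwork l
      · intro j'
        rcases eq_or_ne j' j with hj | hj
        · rw [hj]
          have hpt : ∀ l ∈ univ.filter (fun l => Alive l j), t' l j =
              t l j + ((if l = i then ε else 0) + (if l = k then -ε else 0)) := by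
            intro l _
            rcases eq_or_ne l i with hl | hl
            · rw [hl, ht'i j, if_pos rfl, if_pos rfl, if_neg hik, add_zero]
            rcases eq_or_ne l k with hl' | hl'
            · rw [hl', ht'k j, if_pos rfl, if_neg hki, if_pos rfl]
              ring
            · rw [ht'o l j hl hl', if_neg hl, if_neg hl']; ring
          rw [Finset.sum_congr rfl hpt, Finset.sum_add_distrib, Finset.sum_add_distrib,
            Finset.sum_ite_eq' _ i (fun _ => ε), Finset.sum_ite_eq' _ k (fun _ => -ε),
            if_pos (Finset.mem_filter.mpr ⟨mem_univ i, hAi⟩),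
            if_pos (Finset.mem_filter.mpr ⟨mem_univ k, hAk⟩)]
          have := hcap j
          linarith
        · rw [Finset.sum_congr rfl (fun l _ => by simp [ht', hj] :
            ∀ l ∈ univ.filter (fun l => Alive l j'), t' l j' = t l j')]
          exact hcap j'
      · intro l j'
        rcases eq_or_ne l i with hl | hl
        · rw [hl, ht'i j']
          have := htlen i j'
          split_ifs with hc
          · rw [hc]; linarith
          · linarith
        rcases eq_or_ne l k with hl' | hl'
        · rw [hl', ht'k j']
          have := htlen k j'
          split_ifs <;> linarith
        · rw [ht'o l j' hl hl']; exact htlen l j'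
    have hE : Energy α w s' < Energy α w s := by
      unfold Energy
      refine sum_lt_sum_two (fun l => w l * s' l ^ (α - 1)) (fun l => w l * s l ^ (α - 1)) hik ?_ ?_
      · intro l hli hlk
        rw [hs'o l hli hlk]
      · rw [hs'i, hs'k, hsval i, hsval k]
        exact hdec
    linarith [hopt s' t' hfeas']
  · -- P5
    intro j hcard i hAi
    by_contra hne
    have hlt : t i j < len j := lt_of_le_of_ne (htlen i j) hne
    set δ : ℝ := len j - t i j with hδdef
    have hδpos : 0 < δ := by rw [hδdef]; linarith
    set t' : Fin n → Fin L → ℝ := fun l j' =>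
      if l = i ∧ j' = j then len j else t l j' with ht'
    set s' : Fin n → ℝ := Function.update s i (w i / (T i + δ)) with hs'
    have hTiδ : 0 < T i + δ := by linarith [hTpos i]
    have hjmem : j ∈ univ.filter (fun j' => Alive i j') :=
      Finset.mem_filter.mpr ⟨mem_univ j, hAi⟩
    have ht'i : ∀ j', t' i j' = t i j' + (if j' = j then δ else 0) := by
      intro j'
      rcases eq_or_ne j' j with hj | hj
      · rw [hj]; simp [ht', hδdef]
      · simp [ht', hj]
    have ht'o : ∀ l j', l ≠ i → t' l j' = t l j' := by
      intro l j' h1; simp [ht', h1]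
    have hsumi : ∑ j' ∈ univ.filter (fun j' => Alive i j'), t' i j' = T i + δ := by
      rw [Finset.sum_congr rfl (fun j' _ => ht'i j'), Finset.sum_add_distrib,
        Finset.sum_ite_eq' _ j (fun _ => δ), if_pos hjmem]
    have hfeas' : EFeasible m w len Alive s' t' := by
      refine ⟨?_, ?_, ?_, ?_, ?_, ?_⟩
      · intro l
        rcases eq_or_ne l i with hl | hl
        · rw [hl, hs', Function.update_self]; exact div_pos (hw i) hTiδ
        · rw [hs', Function.update_of_ne hl]; exact hspos l
      · intro l j'
        rcases eq_or_ne l i with hl | hl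
        · rw [hl, ht'i j']
          have := htnn i j'
          split_ifs <;> linarith
        · rw [ht'o l j' hl]; exact htnn l j'
      · intro l j' hA
        rcases eq_or_ne l i with hl | hl
        · rcases eq_or_ne j' j with hj | hj
          · exfalso; rw [hl, hj] at hA; exact hA hAi
          · rw [hl, ht'i j', if_neg hj, add_zero]
            exact hdead i j' (by rw [← hl]; exact hA)
        · rw [ht'o l j' hl]; exact hdead l j' hA
      · intro l
        rcases eq_or_ne l i with hl | hl
        · rw [hl, hsumi, hs', Function.update_self, hdd (w i) (T i + δ) (hw i) hTiδ]
        · rw [Finset.sum_congr rfl (fun j' _ => ht'o l j' hl), hs', Function.update_of_ne hl]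
          exact hwork l
      · intro j'
        rcases eq_or_ne j' j with hj | hj
        · rw [hj]
          have hb : ∀ l ∈ univ.filter (fun l => Alive l j), t' l j ≤ len j := by
            intro l _
            rcases eq_or_ne l i with hl | hl
            · rw [hl, ht'i j, if_pos rfl, hδdef]; linarith
            · rw [ht'o l j hl]; exact htlen l j
          calc ∑ l ∈ univ.filter (fun l => Alive l j), t' l j
              ≤ ((univ.filter (fun l => Alive l j)).card : ℝ) * len j := by
                have := Finset.sum_le_card_nsmul _ _ _ hb
                simpa [nsmul_eq_mul] using this
            _ = ((min m (univ.filter (fun l => Alive l j)).card : ℕ) : ℝ) * len j := by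
                rw [min_eq_right hcard]
        · rw [Finset.sum_congr rfl (fun l _ => by simp [ht', hj] :
            ∀ l ∈ univ.filter (fun l => Alive l j'), t' l j' = t l j')]
          exact hcap j'
      · intro l j'
        rcases eq_or_ne l i with hl | hl
        · rw [hl, ht'i j']
          have := htlen i j'
          split_ifs with hc
          · rw [hc, hδdef]; linarith
          · linarith
        · rw [ht'o l j' hl]; exact htlen l j'
    have hE : Energy α w s' < Energy α w s := by
      unfold Energy
      refine sum_lt_sum_one (fun l => w l * s' l ^ (α - 1)) (fun l => w l * s l ^ (α - 1)) (i := i) ?_ ?_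
      · intro l hl; rw [hs', Function.update_of_ne hl]
      · rw [hs', Function.update_self]
        have hsi : w i / (T i + δ) < s i := by
          rw [hsval i]
          exact div_lt_div_of_pos_left (hw i) (hTpos i) (by linarith)
        have hb : (w i / (T i + δ)) ^ (α - 1) < s i ^ (α - 1) :=
          Real.rpow_lt_rpow (le_of_lt (div_pos (hw i) hTiδ)) hsi (by linarith)
        exact mul_lt_mul_of_pos_left hb (hw i)
    linarith [hopt s' t' hfeas']

/-- (Necessity direction of Lemma 1.) Every optimal feasible solution of the
energy-minimization convex program satisfies properties (P2)–(P5). -/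
theorem necessity_of_KKT_properties {n L : ℕ} (m : ℕ) (α : ℝ)
    (w : Fin n → ℝ) (len : Fin L → ℝ) (Alive : Fin n → Fin L → Bool)
    (hm : 1 ≤ m) (hα : 1 < α) (hw : ∀ i, 0 < w i) (hlen : ∀ j, 0 < len j)
    (s : Fin n → ℝ) (t : Fin n → Fin L → ℝ)
    (hfeas : EFeasible m w len Alive s t)
    (hopt : ∀ s' t', EFeasible m w len Alive s' t' → Energy α w s ≤ Energy α w s') :
    P2 Alive s t ∧ P3 len Alive s t ∧ P4 len Alive s t ∧ P5 m len Alive t := by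
  obtain ⟨hkey, hP5⟩ := aux_key_and_P5 m α w len Alive hα hw s t hfeas hopt
  refine ⟨?_, ?_, ?_, hP5⟩
  · intro i j hAi hti k hAk htk
    exact hkey j i k hAi hAk (by rw [hti]; exact hlen j) htk
  · intro i j hAi hti k hAk htk
    exact hkey j k i hAk hAi htk (by rw [hti]; exact hlen j)
  · intro i k j hAi hAk h1 h2 h3 h4
    exact le_antisymm (hkey j i k hAi hAk h2 h3) (hkey j k i hAk hAi h4 h1)
end

section
/- (Claim 1.) Let N be a finite directed network with nonnegative edge capacities, source s and sink t, let f be any maximum (s,t)-flow of N, and let N_f be the residual graph of f. Then a node v is an upstream node (i.e., v lies on the source side of every minimum (s,t)-cut of N) if and only if v is reachable from s by a directed path in N_f. In particular, the set of upstream nodes can be found by a breadth-first search from s in the residual graph of any maximum flow. -/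
/-- `f` is a flow for capacities `c` with source `s` and sink `t`:
`0 ≤ f ≤ c` on every (ordered) pair of nodes, and flow is conserved at every
node other than `s` and `t`. -/
def IsFlow {V : Type*} [Fintype V] (c f : V → V → ℝ) (s t : V) : Prop :=
  (∀ u v, 0 ≤ f u v) ∧ (∀ u v, f u v ≤ c u v) ∧
  (∀ v, v ≠ s → v ≠ t → ∑ u, f u v = ∑ u, f v u)

/-- The value of a flow: the net flow leaving the source `s`. -/
def flowValue {V : Type*} [Fintype V] (f : V → V → ℝ) (s : V) : ℝ :=
  (∑ u, f s u) - (∑ u, f u s)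

/-- `f` is a maximum flow. -/
def IsMaxFlow {V : Type*} [Fintype V] (c f : V → V → ℝ) (s t : V) : Prop :=
  IsFlow c f s t ∧ ∀ g, IsFlow c g s t → flowValue g s ≤ flowValue f s

/-- An `(s,t)`-cut, identified with its source side `X`: `s ∈ X` and `t ∉ X`.
The edges of the cut are the pairs `(u, v)` with `u ∈ X` and `v ∉ X`. -/
def IsCut {V : Type*} (X : Finset V) (s t : V) : Prop := s ∈ X ∧ t ∉ X

/-- The capacity of the cut with source side `X`. -/
def cutCap {V : Type*} [Fintype V] [DecidableEq V] (c : V → V → ℝ) (X : Finset V) : ℝ :=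
  ∑ u ∈ X, ∑ v ∈ Xᶜ, c u v

/-- `X` is (the source side of) a minimum `(s,t)`-cut. -/
def IsMinCut {V : Type*} [Fintype V] [DecidableEq V] (c : V → V → ℝ) (X : Finset V)
    (s t : V) : Prop :=
  IsCut X s t ∧ ∀ Y : Finset V, IsCut Y s t → cutCap c X ≤ cutCap c Y

/-- Net inflow at a node. -/
def netIn {V : Type*} [Fintype V] (g : V → V → ℝ) (w : V) : ℝ :=
  (∑ u, g u w) - ∑ u, g w u

lemma push_aux {V : Type*} [Fintype V] [DecidableEq V] (c f : V → V → ℝ)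
    (ε : ℝ) (hε : 0 < ε) :
    ∀ (l : List V) (a : V) (g : V → V → ℝ),
      List.Chain (fun a b => f a b < c a b ∨ 0 < f b a) a l →
      (∀ x y, 0 ≤ g x y) → (∀ x y, g x y ≤ c x y) →
      (∀ x y, f x y < c x y → |g x y - f x y| + l.length * ε ≤ c x y - f x y) →
      (∀ x y, 0 < f x y → |g x y - f x y| + l.length * ε ≤ f x y) →
      ∃ g' : V → V → ℝ, (∀ x y, 0 ≤ g' x y) ∧ (∀ x y, g' x y ≤ c x y) ∧
        ∀ w, netIn g' w = netIn g w
            + (if w = (a :: l).getLast (List.cons_ne_nil _ _) then ε else 0)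
            - (if w = a then ε else 0) := by
  intro l
  induction l with
  | nil =>
    intro a g _ h0 hc' _ _
    exact ⟨g, h0, hc', fun w => by
      show netIn g w = netIn g w + (if w = a then ε else 0) - (if w = a then ε else 0); ring⟩
  | cons b l ih =>
    intro a g hch h0 hcap hinv1 hinv2
    replace hch := List.isChain_cons_cons.mp hch
    obtain ⟨hab, hch'⟩ := hch
    have hlen : ∀ (A B : ℝ), |A| + ((b :: l).length : ℝ) * ε ≤ B →
        |A| + ((l.length : ℝ) * ε + ε) ≤ B := by
      intro A B h
      have : ((b :: l).length : ℝ) = (l.length : ℝ) + 1 := by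
        simp [List.length_cons]
      rw [this] at h; linarith
    by_cases hfab : f a b < c a b
    · -- forward push on edge (a,b)
      set g1 : V → V → ℝ := fun x y => g x y + if x = a ∧ y = b then ε else 0 with hg1
      have hkey := hlen _ _ (hinv1 a b hfab)
      have hllen : (0:ℝ) ≤ (l.length : ℝ) * ε := by positivity
      have h0' : ∀ x y, 0 ≤ g1 x y := by
        intro x y; dsimp only [g1]; have := h0 x y
        split_ifs <;> linarith
      have hcap' : ∀ x y, g1 x y ≤ c x y := by
        intro x y; dsimp only [g1]
        split_ifs with h
        · obtain ⟨rfl, rfl⟩ := h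
          have := le_abs_self (g x y - f x y)
          linarith
        · simpa using hcap x y
      have habs1 : |g1 a b - f a b| ≤ |g a b - f a b| + ε := by
        dsimp only [g1]; rw [if_pos (show _ ∧ _ from ⟨rfl, rfl⟩)]
        calc |g a b + ε - f a b| = |(g a b - f a b) + ε| := by ring_nf
          _ ≤ |g a b - f a b| + |ε| := abs_add_le _ _
          _ = |g a b - f a b| + ε := by rw [abs_of_pos hε]
      have hsame : ∀ x y, ¬(x = a ∧ y = b) → g1 x y = g x y := by
        intro x y h; dsimp only [g1]; rw [if_neg h]; ring
      have hinv1' : ∀ x y, f x y < c x y →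
          |g1 x y - f x y| + l.length * ε ≤ c x y - f x y := by
        intro x y hxy
        by_cases h : x = a ∧ y = b
        · obtain ⟨rfl, rfl⟩ := h
          have := hlen _ _ (hinv1 x y hxy)
          linarith [habs1]
        · rw [hsame x y h]
          have := hlen _ _ (hinv1 x y hxy)
          linarith
      have hinv2' : ∀ x y, 0 < f x y →
          |g1 x y - f x y| + l.length * ε ≤ f x y := by
        intro x y hxy
        by_cases h : x = a ∧ y = b
        · obtain ⟨rfl, rfl⟩ := h
          have := hlen _ _ (hinv2 x y hxy)
          linarith [habs1]
        · rw [hsame x y h]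
          have := hlen _ _ (hinv2 x y hxy)
          linarith
      have hnet : ∀ w, netIn g1 w = netIn g w
          + (if w = b then ε else 0) - (if w = a then ε else 0) := by
        intro w
        have hs1 : (∑ u, g1 u w) = (∑ u, g u w) + (if w = b then ε else 0) := by
          dsimp only [g1]
          rw [Finset.sum_add_distrib]
          congr 1
          by_cases hw : w = b
          · subst hw; simp
          · simp [hw]
        have hs2 : (∑ u, g1 w u) = (∑ u, g w u) + (if w = a then ε else 0) := by
          dsimp only [g1]
          rw [Finset.sum_add_distrib]
          congr 1
          by_cases hw : w = a
          · subst hw; simp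
          · simp [hw]
        unfold netIn; rw [hs1, hs2]; ring
      obtain ⟨g', hg0, hgc, hgnet⟩ := ih b g1 hch' h0' hcap' hinv1' hinv2'
      refine ⟨g', hg0, hgc, fun w => ?_⟩
      rw [hgnet w, hnet w, List.getLast_cons_cons]
      ring
    · -- backward push: reduce flow on edge (b,a)
      have hba : 0 < f b a := hab.resolve_left hfab
      set g1 : V → V → ℝ := fun x y => g x y - if x = b ∧ y = a then ε else 0 with hg1
      have hkey := hlen _ _ (hinv2 b a hba)
      have hllen : (0:ℝ) ≤ (l.length : ℝ) * ε := by positivity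
      have h0' : ∀ x y, 0 ≤ g1 x y := by
        intro x y; dsimp only [g1]
        split_ifs with h
        · obtain ⟨rfl, rfl⟩ := h
          have := neg_abs_le (g x y - f x y)
          linarith
        · have := h0 x y; linarith
      have hcap' : ∀ x y, g1 x y ≤ c x y := by
        intro x y; dsimp only [g1]; have := hcap x y
        split_ifs <;> linarith
      have habs1 : |g1 b a - f b a| ≤ |g b a - f b a| + ε := by
        dsimp only [g1]; rw [if_pos (show _ ∧ _ from ⟨rfl, rfl⟩)]
        calc |g b a - ε - f b a| = |(g b a - f b a) + (-ε)| := by ring_nf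
          _ ≤ |g b a - f b a| + |(-ε)| := abs_add_le _ _
          _ = |g b a - f b a| + ε := by rw [abs_neg, abs_of_pos hε]
      have hsame : ∀ x y, ¬(x = b ∧ y = a) → g1 x y = g x y := by
        intro x y h; dsimp only [g1]; rw [if_neg h]; ring
      have hinv1' : ∀ x y, f x y < c x y →
          |g1 x y - f x y| + l.length * ε ≤ c x y - f x y := by
        intro x y hxy
        by_cases h : x = b ∧ y = a
        · obtain ⟨rfl, rfl⟩ := h
          have := hlen _ _ (hinv1 x y hxy)
          linarith [habs1]
        · rw [hsame x y h]
          have := hlen _ _ (hinv1 x y hxy)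
          linarith
      have hinv2' : ∀ x y, 0 < f x y →
          |g1 x y - f x y| + l.length * ε ≤ f x y := by
        intro x y hxy
        by_cases h : x = b ∧ y = a
        · obtain ⟨rfl, rfl⟩ := h
          have := hlen _ _ (hinv2 x y hxy)
          linarith [habs1]
        · rw [hsame x y h]
          have := hlen _ _ (hinv2 x y hxy)
          linarith
      have hnet : ∀ w, netIn g1 w = netIn g w
          + (if w = b then ε else 0) - (if w = a then ε else 0) := by
        intro w
        have hs1 : (∑ u, g1 u w) = (∑ u, g u w) - (if w = a then ε else 0) := by
          dsimp only [g1]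
          rw [Finset.sum_sub_distrib]
          congr 1
          by_cases hw : w = a
          · subst hw; simp
          · simp [hw]
        have hs2 : (∑ u, g1 w u) = (∑ u, g w u) - (if w = b then ε else 0) := by
          dsimp only [g1]
          rw [Finset.sum_sub_distrib]
          congr 1
          by_cases hw : w = b
          · subst hw; simp
          · simp [hw]
        unfold netIn; rw [hs1, hs2]; ring
      obtain ⟨g', hg0, hgc, hgnet⟩ := ih b g1 hch' h0' hcap' hinv1' hinv2'
      refine ⟨g', hg0, hgc, fun w => ?_⟩
      rw [hgnet w, hnet w, List.getLast_cons_cons]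
      ring

lemma flowValue_eq_cut {V : Type*} [Fintype V] [DecidableEq V] {c f : V → V → ℝ} {s t : V}
    (hf : IsFlow c f s t) {X : Finset V} (hX : IsCut X s t) :
    flowValue f s = (∑ u ∈ X, ∑ v ∈ Xᶜ, f u v) - ∑ u ∈ Xᶜ, ∑ v ∈ X, f u v := by
  have h1 : ∑ u ∈ X, ((∑ v, f u v) - ∑ v, f v u) = flowValue f s := by
    rw [Finset.sum_eq_single_of_mem s hX.1 (fun u hu hus => by
      have ht : u ≠ t := fun h => hX.2 (h ▸ hu)
      have hcons := hf.2.2 u hus ht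
      linarith)]
    rfl
  have h1' : (∑ u ∈ X, ∑ v, f u v) - (∑ u ∈ X, ∑ v, f v u) = flowValue f s := by
    rw [← Finset.sum_sub_distrib]; exact h1
  have e2 : ∑ u ∈ X, ∑ v, f u v
      = (∑ u ∈ X, ∑ v ∈ X, f u v) + ∑ u ∈ X, ∑ v ∈ Xᶜ, f u v := by
    rw [← Finset.sum_add_distrib]
    exact Finset.sum_congr rfl fun u _ => (Finset.sum_add_sum_compl X _).symm
  have e3 : ∑ u ∈ X, ∑ v, f v u
      = (∑ u ∈ X, ∑ v ∈ X, f v u) + ∑ u ∈ X, ∑ v ∈ Xᶜ, f v u := by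
    rw [← Finset.sum_add_distrib]
    exact Finset.sum_congr rfl fun u _ => (Finset.sum_add_sum_compl X _).symm
  have e4 : ∑ u ∈ X, ∑ v ∈ X, f v u = ∑ u ∈ X, ∑ v ∈ X, f u v := Finset.sum_comm
  have e5 : ∑ u ∈ X, ∑ v ∈ Xᶜ, f v u = ∑ u ∈ Xᶜ, ∑ v ∈ X, f u v := Finset.sum_comm
  linarith

lemma flowValue_le_cutCap {V : Type*} [Fintype V] [DecidableEq V] {c f : V → V → ℝ} {s t : V}
    (hf : IsFlow c f s t) {X : Finset V} (hX : IsCut X s t) :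
    flowValue f s ≤ cutCap c X := by
  rw [flowValue_eq_cut hf hX]
  have h1 : ∑ u ∈ X, ∑ v ∈ Xᶜ, f u v ≤ cutCap c X :=
    Finset.sum_le_sum fun u _ => Finset.sum_le_sum fun v _ => hf.2.1 u v
  have h2 : 0 ≤ ∑ u ∈ Xᶜ, ∑ v ∈ X, f u v :=
    Finset.sum_nonneg fun u _ => Finset.sum_nonneg fun v _ => hf.1 u v
  linarith

/-- There is a uniform positive lower bound on all positive residual slacks. -/
lemma exists_delta {V : Type*} [Fintype V] [DecidableEq V] (c f : V → V → ℝ) :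
    ∃ δ : ℝ, 0 < δ ∧ (∀ x y, f x y < c x y → δ ≤ c x y - f x y) ∧
      (∀ x y, 0 < f x y → δ ≤ f x y) := by
  classical
  set S : Finset ℝ :=
    ((((Finset.univ : Finset (V × V)).image fun p => c p.1 p.2 - f p.1 p.2) ∪
      ((Finset.univ : Finset (V × V)).image fun p => f p.1 p.2)).filter fun x => 0 < x)
    with hSdef
  have hmem1 : ∀ x y, f x y < c x y → c x y - f x y ∈ S := by
    intro x y h
    rw [hSdef, Finset.mem_filter]
    exact ⟨Finset.mem_union_left _ (Finset.mem_image.mpr ⟨(x, y), Finset.mem_univ _, rfl⟩),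
      by linarith⟩
  have hmem2 : ∀ x y, 0 < f x y → f x y ∈ S := by
    intro x y h
    rw [hSdef, Finset.mem_filter]
    exact ⟨Finset.mem_union_right _ (Finset.mem_image.mpr ⟨(x, y), Finset.mem_univ _, rfl⟩), h⟩
  by_cases hne : S.Nonempty
  · refine ⟨S.min' hne, ?_, fun x y h => S.min'_le _ (hmem1 x y h),
      fun x y h => S.min'_le _ (hmem2 x y h)⟩
    exact (Finset.mem_filter.mp (S.min'_mem hne)).2
  · refine ⟨1, one_pos, fun x y h => absurd (hmem1 x y h) ?_, fun x y h => absurd (hmem2 x y h) ?_⟩ <;>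
      simp only [Finset.not_nonempty_iff_eq_empty] at hne <;> simp [hne]

lemma exists_better {V : Type*} [Fintype V] [DecidableEq V] {c f : V → V → ℝ} {s t : V}
    (hst : s ≠ t) (hf : IsFlow c f s t)
    (hres : Relation.ReflTransGen (fun a b => f a b < c a b ∨ 0 < f b a) s t) :
    ∃ g, IsFlow c g s t ∧ flowValue f s < flowValue g s := by
  obtain ⟨l, hch, hlast⟩ := List.exists_isChain_cons_of_relationReflTransGen hres
  have hl : l ≠ [] := by
    rintro rfl
    exact hst hlast
  have hn : 0 < (l.length : ℝ) := by
    have := List.length_pos_iff.mpr hl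
    exact_mod_cast this
  obtain ⟨δ, hδ0, hδ1, hδ2⟩ := exists_delta c f
  set ε : ℝ := δ / l.length with hεdef
  have hε : 0 < ε := div_pos hδ0 hn
  have hnε : (l.length : ℝ) * ε = δ := by
    rw [hεdef]; field_simp
  obtain ⟨g, hg0, hgc, hgnet⟩ := push_aux c f ε hε l s f hch hf.1 hf.2.1
    (fun x y h => by rw [sub_self, abs_zero, zero_add, hnε]; exact hδ1 x y h)
    (fun x y h => by rw [sub_self, abs_zero, zero_add, hnε]; exact hδ2 x y h)
  rw [hlast] at hgnet
  have hfnet : ∀ w, netIn f w = netIn f w := fun _ => rfl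
  refine ⟨g, ⟨hg0, hgc, fun w hws hwt => ?_⟩, ?_⟩
  · have hk := hgnet w
    rw [if_neg hwt, if_neg hws] at hk
    have hcons := hf.2.2 w hws hwt
    have : netIn f w = 0 := by unfold netIn; linarith
    have hg' : netIn g w = 0 := by rw [hk, this]; ring
    unfold netIn at hg'
    linarith
  · have hk := hgnet s
    rw [if_neg hst, if_pos rfl] at hk
    have h1 : flowValue f s = -netIn f s := by unfold flowValue netIn; ring
    have h2 : flowValue g s = -netIn g s := by unfold flowValue netIn; ring
    rw [h1, h2, hk]
    linarith

/-- (Claim 1.) In a finite directed network with nonnegative capacities `c`,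
source `s` and sink `t`, given any maximum flow `f`, a node `v` is an upstream
node (it lies on the source side of every minimum `(s,t)`-cut) if and only if
`v` is reachable from `s` by a directed path in the residual graph of `f`
(whose edges are the pairs `(a, b)` with `f a b < c a b`, or `0 < f b a`). -/
theorem upstream_iff_residual_reachable {V : Type*} [Fintype V] [DecidableEq V]
    (c f : V → V → ℝ) (s t : V) (hst : s ≠ t) (hc : ∀ u v, 0 ≤ c u v)
    (hf : IsMaxFlow c f s t) (v : V) :
    (∀ X : Finset V, IsMinCut c X s t → v ∈ X) ↔
      Relation.ReflTransGen (fun a b => f a b < c a b ∨ 0 < f b a) s v := by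
  classical
  obtain ⟨hflow, hmax⟩ := hf
  have hnt : ¬ Relation.ReflTransGen (fun a b => f a b < c a b ∨ 0 < f b a) s t := by
    intro h
    obtain ⟨g, hg, hlt⟩ := exists_better hst hflow h
    exact absurd (hmax g hg) (not_le.mpr hlt)
  set R : Finset V :=
    Finset.univ.filter (fun w => Relation.ReflTransGen (fun a b => f a b < c a b ∨ 0 < f b a) s w)
    with hRdef
  have hmemR : ∀ w, w ∈ R ↔ Relation.ReflTransGen (fun a b => f a b < c a b ∨ 0 < f b a) s w := by
    intro w; rw [hRdef, Finset.mem_filter]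
    simp
  have hcutR : IsCut R s t := ⟨(hmemR s).mpr .refl, fun h => hnt ((hmemR t).mp h)⟩
  -- R's cut edges are saturated, reverse edges empty
  have hsatR : ∀ u ∈ R, ∀ w ∈ Rᶜ, f u w = c u w := by
    intro u hu w hw
    by_contra hne
    have hlt : f u w < c u w := lt_of_le_of_ne (hflow.2.1 u w) hne
    exact (Finset.mem_compl.mp hw) ((hmemR w).mpr (((hmemR u).mp hu).tail (Or.inl hlt)))
  have hzeroR : ∀ u ∈ Rᶜ, ∀ w ∈ R, f u w = 0 := by
    intro u hu w hw
    by_contra hne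
    have hlt : 0 < f u w := lt_of_le_of_ne (hflow.1 u w) (Ne.symm hne)
    exact (Finset.mem_compl.mp hu) ((hmemR u).mpr (((hmemR w).mp hw).tail (Or.inr hlt)))
  have hRval : cutCap c R = flowValue f s := by
    rw [flowValue_eq_cut hflow hcutR]
    have h1 : ∑ u ∈ R, ∑ w ∈ Rᶜ, f u w = cutCap c R :=
      Finset.sum_congr rfl fun u hu => Finset.sum_congr rfl fun w hw => hsatR u hu w hw
    have h2 : ∑ u ∈ Rᶜ, ∑ w ∈ R, f u w = 0 :=
      Finset.sum_eq_zero fun u hu => Finset.sum_eq_zero fun w hw => hzeroR u hu w hw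
    rw [h1, h2, sub_zero]
  have hRmin : IsMinCut c R s t :=
    ⟨hcutR, fun Y hY => by rw [hRval]; exact flowValue_le_cutCap hflow hY⟩
  constructor
  · intro h
    exact (hmemR v).mp (h R hRmin)
  · intro hv X hX
    have hXR : cutCap c X ≤ cutCap c R := hX.2 R hcutR
    have heq : cutCap c X = flowValue f s := le_antisymm (hXR.trans_eq hRval)
      (flowValue_le_cutCap hflow hX.1)
    have hA : flowValue f s
        = (∑ u ∈ X, ∑ w ∈ Xᶜ, f u w) - ∑ u ∈ Xᶜ, ∑ w ∈ X, f u w :=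
      flowValue_eq_cut hflow hX.1
    have hAle : ∑ u ∈ X, ∑ w ∈ Xᶜ, f u w ≤ cutCap c X :=
      Finset.sum_le_sum fun u _ => Finset.sum_le_sum fun w _ => hflow.2.1 u w
    have hB0 : 0 ≤ ∑ u ∈ Xᶜ, ∑ w ∈ X, f u w :=
      Finset.sum_nonneg fun u _ => Finset.sum_nonneg fun w _ => hflow.1 u w
    have hAeq : ∑ u ∈ X, ∑ w ∈ Xᶜ, f u w = cutCap c X := by linarith
    have hBeq : ∑ u ∈ Xᶜ, ∑ w ∈ X, f u w = 0 := by linarith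
    -- saturation of every cut edge of X
    have hsatX : ∀ u ∈ X, ∀ w ∈ Xᶜ, f u w = c u w := by
      have hz : ∑ u ∈ X, ∑ w ∈ Xᶜ, (c u w - f u w) = 0 := by
        simp only [Finset.sum_sub_distrib]
        unfold cutCap at hAeq
        linarith
      have h1 := (Finset.sum_eq_zero_iff_of_nonneg
        (fun u _ => Finset.sum_nonneg fun w _ => sub_nonneg.mpr (hflow.2.1 u w))).mp hz
      intro u hu w hw
      have h2 := (Finset.sum_eq_zero_iff_of_nonneg
        (fun w _ => sub_nonneg.mpr (hflow.2.1 u w))).mp (h1 u hu) w hw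
      linarith
    have hzeroX : ∀ u ∈ Xᶜ, ∀ w ∈ X, f u w = 0 := by
      have := (Finset.sum_eq_zero_iff_of_nonneg
        (fun u _ => Finset.sum_nonneg fun w _ => hflow.1 u w)).mp hBeq
      intro u hu w hw
      exact (Finset.sum_eq_zero_iff_of_nonneg fun w _ => hflow.1 u w).mp (this u hu) w hw
    induction hv with
    | refl => exact hX.1.1
    | @tail b w hsb hbw ih =>
      by_contra hwX
      have hb : b ∈ X := ih
      rcases hbw with h1 | h2
      · rw [hsatX b hb w (Finset.mem_compl.mpr hwX)] at h1
        exact lt_irrefl _ h1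
      · rw [hzeroX w (Finset.mem_compl.mpr hwX) b hb] at h2
        exact lt_irrefl _ h2
end

section
/- (Lemma 3.) If <J,I,v> is a critical instance of the Work Assignment Problem, then there exists at least one critical job j_i ∈ J. -/
open Finset

/-- A feasible assignment for the WAP instance `⟨J, I, v⟩`: times `t i j ≥ 0`,
`t i j = 0` if job `i` is not alive in interval `j`, `t i j ≤ |I j|`,
the capacity `m j * |I j|` of each interval is respected, and each job `i`
receives exactly `w i / v` units of processing time. -/
def WFeasAssign {n L : ℕ} (w : Fin n → ℝ) (len : Fin L → ℝ) (mj : Fin L → ℕ)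
    (Alive : Fin n → Fin L → Bool) (v : ℝ) (t : Fin n → Fin L → ℝ) : Prop :=
  (∀ i j, 0 ≤ t i j) ∧
  (∀ i j, ¬ Alive i j → t i j = 0) ∧
  (∀ i j, t i j ≤ len j) ∧
  (∀ j, ∑ i ∈ univ.filter (fun i => Alive i j), t i j ≤ (mj j : ℝ) * len j) ∧
  (∀ i, ∑ j ∈ univ.filter (fun j => Alive i j), t i j = w i / v)

/-- The WAP instance `⟨J, I, v⟩` is feasible if a feasible assignment exists. -/
def WFeasible {n L : ℕ} (w : Fin n → ℝ) (len : Fin L → ℝ) (mj : Fin L → ℕ)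
    (Alive : Fin n → Fin L → Bool) (v : ℝ) : Prop :=
  ∃ t, WFeasAssign w len mj Alive v t

/-- Job `i` is critical for `⟨J, I, v⟩`: in every feasible assignment and every
interval `j` in which `i` is alive, either `t i j = |I j|` or the whole capacity
`m j * |I j|` of the interval is used. -/
def CriticalJob {n L : ℕ} (w : Fin n → ℝ) (len : Fin L → ℝ) (mj : Fin L → ℕ)
    (Alive : Fin n → Fin L → Bool) (v : ℝ) (i : Fin n) : Prop :=
  ∀ t, WFeasAssign w len mj Alive v t → ∀ j, Alive i j →
    t i j = len j ∨ ∑ k ∈ univ.filter (fun k => Alive k j), t k j = (mj j : ℝ) * len j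

/-- The instance `⟨J, I, v⟩` is critical: it is feasible, but `⟨J, I, v'⟩` is
infeasible for every speed `0 < v' < v`. -/
def CriticalInstance {n L : ℕ} (w : Fin n → ℝ) (len : Fin L → ℝ) (mj : Fin L → ℕ)
    (Alive : Fin n → Fin L → Bool) (v : ℝ) : Prop :=
  WFeasible w len mj Alive v ∧
    ∀ v', 0 < v' → v' < v → ¬ WFeasible w len mj Alive v'

/-- (Lemma 3.) If `⟨J, I, v⟩` is a critical instance of the Work Assignment
Problem, then there is at least one critical job. -/
theorem critical_instance_has_critical_job {n L : ℕ} (w : Fin n → ℝ)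
    (len : Fin L → ℝ) (mj : Fin L → ℕ) (Alive : Fin n → Fin L → Bool) (v : ℝ)
    (hw : ∀ i, 0 < w i) (hlen : ∀ j, 0 < len j) (hmj : ∀ j, 1 ≤ mj j) (hv : 0 < v)
    (hcrit : CriticalInstance w len mj Alive v) :
    ∃ i : Fin n, CriticalJob w len mj Alive v i := by
  by_contra hno
  push_neg at hno
  -- First, n must be positive: otherwise the instance is feasible at speed v/2.
  rcases Nat.eq_zero_or_pos n with hn | hn
  · subst hn
    refine hcrit.2 (v / 2) (by linarith) (by linarith)
      ⟨fun i j => 0, fun i j => le_refl 0, fun i j _ => rfl,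
        fun i j => (hlen j).le, fun j => ?_, fun i => i.elim0⟩
    have : ∑ i ∈ univ.filter (fun i : Fin 0 => Alive i j), (0 : ℝ) = 0 := by simp
    rw [this]
    exact mul_nonneg (Nat.cast_nonneg _) (hlen j).le
  -- For each job i, extract a feasible assignment with strict slack at some interval.
  have key : ∀ i : Fin n, ∃ τ : Fin n → Fin L → ℝ, ∃ J : Fin L,
      WFeasAssign w len mj Alive v τ ∧ Alive i J ∧ τ i J < len J ∧
        ∑ k ∈ univ.filter (fun k => Alive k J), τ k J < (mj J : ℝ) * len J := by
    intro i
    have h := hno i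
    simp only [CriticalJob, not_forall] at h
    obtain ⟨τ, hτ, j, hj, hne⟩ := h
    push_neg at hne
    exact ⟨τ, j, hτ, hj, lt_of_le_of_ne (hτ.2.2.1 i j) hne.1,
      lt_of_le_of_ne (hτ.2.2.2.1 j) hne.2⟩
  choose τ Jx hfeas halive hrow hcol using key
  have hNpos : (0 : ℝ) < (n : ℝ) := by exact_mod_cast hn
  -- Average assignment
  set t : Fin n → Fin L → ℝ := fun i j => (∑ k, τ k i j) / n with ht_def
  have ht_nonneg : ∀ i j, 0 ≤ t i j := fun i j =>
    div_nonneg (Finset.sum_nonneg fun k _ => (hfeas k).1 i j) hNpos.le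
  have ht_zero : ∀ i j, ¬ Alive i j → t i j = 0 := by
    intro i j hj
    simp only [ht_def]
    rw [Finset.sum_eq_zero fun k _ => (hfeas k).2.1 i j hj, zero_div]
  have ht_le : ∀ i j, t i j ≤ len j := by
    intro i j
    rw [ht_def, div_le_iff₀ hNpos]
    calc ∑ k, τ k i j ≤ ∑ _k : Fin n, len j :=
          Finset.sum_le_sum fun k _ => (hfeas k).2.2.1 i j
      _ = len j * n := by simp [mul_comm]
  have ht_col : ∀ j, ∑ i ∈ univ.filter (fun i => Alive i j), t i j ≤ (mj j : ℝ) * len j := by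
    intro j
    have : ∑ i ∈ univ.filter (fun i => Alive i j), t i j
        = (∑ k : Fin n, ∑ i ∈ univ.filter (fun i => Alive i j), τ k i j) / n := by
      rw [Finset.sum_comm, ← Finset.sum_div]
    rw [this, div_le_iff₀ hNpos]
    calc ∑ k : Fin n, ∑ i ∈ univ.filter (fun i => Alive i j), τ k i j
        ≤ ∑ _k : Fin n, (mj j : ℝ) * len j :=
          Finset.sum_le_sum fun k _ => (hfeas k).2.2.2.1 j
      _ = (mj j : ℝ) * len j * n := by simp [mul_comm]
  have ht_tot : ∀ i, ∑ j ∈ univ.filter (fun j => Alive i j), t i j = w i / v := by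
    intro i
    have : ∑ j ∈ univ.filter (fun j => Alive i j), t i j
        = (∑ k : Fin n, ∑ j ∈ univ.filter (fun j => Alive i j), τ k i j) / n := by
      rw [Finset.sum_comm, ← Finset.sum_div]
    rw [this]
    rw [Finset.sum_congr rfl fun k _ => (hfeas k).2.2.2.2 i]
    simp [mul_comm, mul_div_assoc]
    field_simp
  -- strict slacks for the average assignment
  have hrow' : ∀ i, t i (Jx i) < len (Jx i) := by
    intro i
    rw [ht_def, div_lt_iff₀ hNpos]
    calc ∑ k, τ k i (Jx i) < ∑ _k : Fin n, len (Jx i) :=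
          Finset.sum_lt_sum (fun k _ => (hfeas k).2.2.1 i (Jx i))
            ⟨i, Finset.mem_univ i, hrow i⟩
      _ = len (Jx i) * n := by simp [mul_comm]
  have hcol' : ∀ i, ∑ k ∈ univ.filter (fun k => Alive k (Jx i)), t k (Jx i)
      < (mj (Jx i) : ℝ) * len (Jx i) := by
    intro i
    have heq : ∑ k ∈ univ.filter (fun k => Alive k (Jx i)), t k (Jx i)
        = (∑ m : Fin n, ∑ k ∈ univ.filter (fun k => Alive k (Jx i)), τ m k (Jx i)) / n := by
      rw [Finset.sum_comm, ← Finset.sum_div]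
    rw [heq, div_lt_iff₀ hNpos]
    calc ∑ m : Fin n, ∑ k ∈ univ.filter (fun k => Alive k (Jx i)), τ m k (Jx i)
        < ∑ _m : Fin n, (mj (Jx i) : ℝ) * len (Jx i) :=
          Finset.sum_lt_sum (fun m _ => (hfeas m).2.2.2.1 (Jx i))
            ⟨i, Finset.mem_univ i, hcol i⟩
      _ = (mj (Jx i) : ℝ) * len (Jx i) * n := by simp [mul_comm]
  -- the minimal slack ε
  have hne : (univ : Finset (Fin n)).Nonempty := ⟨⟨0, hn⟩, Finset.mem_univ _⟩
  set slack : Fin n → ℝ := fun i =>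
    min (len (Jx i) - t i (Jx i))
      ((mj (Jx i) : ℝ) * len (Jx i) - ∑ k ∈ univ.filter (fun k => Alive k (Jx i)), t k (Jx i))
    with hslack_def
  set ε : ℝ := univ.inf' hne slack with hε_def
  have hεpos : 0 < ε := by
    rw [hε_def, Finset.lt_inf'_iff]
    intro i _
    exact lt_min (by linarith [hrow' i]) (by linarith [hcol' i])
  have hε_le : ∀ i, ε ≤ slack i := fun i => Finset.inf'_le slack (Finset.mem_univ i)
  -- total work W and scaling factor c
  set W : ℝ := ∑ i, w i with hW_def
  have hWpos : 0 < W := Finset.sum_pos (fun i _ => hw i) hne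
  set c : ℝ := ε / W with hc_def
  have hcpos : 0 < c := div_pos hεpos hWpos
  have hcW : c * W = ε := by
    rw [hc_def]; field_simp
  have hcw : ∀ i, c * w i ≤ ε := by
    intro i
    rw [← hcW]
    exact mul_le_mul_of_nonneg_left
      (Finset.single_le_sum (fun k _ => (hw k).le) (Finset.mem_univ i)) hcpos.le
  -- the new speed
  have h1cv : (0 : ℝ) < 1 + c * v := by positivity
  set v' : ℝ := v / (1 + c * v) with hv'_def
  have hv'pos : 0 < v' := div_pos hv h1cv
  have hv'lt : v' < v := by
    rw [hv'_def, div_lt_iff₀ h1cv]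
    nlinarith [mul_pos (mul_pos hv hcpos) hv]
  have htarget : ∀ i, w i / v' = w i / v + c * w i := by
    intro i
    rw [hv'_def]
    field_simp
  -- the perturbed assignment
  set t' : Fin n → Fin L → ℝ := fun i j => t i j + if j = Jx i then c * w i else 0
    with ht'_def
  refine hcrit.2 v' hv'pos hv'lt ⟨t', ?_, ?_, ?_, ?_, ?_⟩
  · intro i j
    have : (0:ℝ) ≤ if j = Jx i then c * w i else 0 := by
      split
      · exact (mul_pos hcpos (hw i)).le
      · exact le_rfl
    simp only [ht'_def]
    linarith [ht_nonneg i j]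
  · intro i j hj
    have hjne : j ≠ Jx i := by
      intro h; exact hj (h ▸ halive i)
    simp only [ht'_def, if_neg hjne, add_zero]
    exact ht_zero i j hj
  · intro i j
    by_cases hj : j = Jx i
    · subst hj
      simp only [ht'_def, if_pos rfl, ite_true]
      have h1 : c * w i ≤ ε := hcw i
      have h2 : ε ≤ len (Jx i) - t i (Jx i) := (hε_le i).trans (min_le_left _ _)
      linarith
    · simp only [ht'_def, if_neg hj, add_zero]
      exact ht_le i j
  · intro j
    have hsplit : ∑ i ∈ univ.filter (fun i => Alive i j), t' i j
        = (∑ i ∈ univ.filter (fun i => Alive i j), t i j)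
          + ∑ i ∈ univ.filter (fun i => Alive i j), (if j = Jx i then c * w i else 0) := by
      simp only [ht'_def, Finset.sum_add_distrib]
    rw [hsplit]
    by_cases hex : ∃ k, Alive k j ∧ j = Jx k
    · obtain ⟨k₀, hk₀a, hk₀j⟩ := hex
      have hS : ∑ i ∈ univ.filter (fun i => Alive i j), (if j = Jx i then c * w i else 0)
          ≤ c * W := by
        rw [hW_def, Finset.mul_sum]
        calc ∑ i ∈ univ.filter (fun i => Alive i j), (if j = Jx i then c * w i else 0)
            ≤ ∑ i ∈ univ.filter (fun i => Alive i j), c * w i :=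
              Finset.sum_le_sum fun i _ => by
                split
                · exact le_rfl
                · exact (mul_pos hcpos (hw i)).le
          _ ≤ ∑ i, c * w i :=
              Finset.sum_le_sum_of_subset_of_nonneg (Finset.filter_subset _ _)
                (fun i _ _ => (mul_pos hcpos (hw i)).le)
      have h2 : ε ≤ (mj (Jx k₀) : ℝ) * len (Jx k₀)
          - ∑ k ∈ univ.filter (fun k => Alive k (Jx k₀)), t k (Jx k₀) :=
        (hε_le k₀).trans (min_le_right _ _)
      rw [hk₀j] at *
      linarith [hcW ▸ hS]
    · push_neg at hex
      have hS : ∑ i ∈ univ.filter (fun i => Alive i j), (if j = Jx i then c * w i else 0)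
          = 0 := by
        apply Finset.sum_eq_zero
        intro i hi
        rw [Finset.mem_filter] at hi
        exact if_neg (hex i (by simpa using hi.2))
      rw [hS, add_zero]
      exact ht_col j
  · intro i
    have hsplit : ∑ j ∈ univ.filter (fun j => Alive i j), t' i j
        = (∑ j ∈ univ.filter (fun j => Alive i j), t i j)
          + ∑ j ∈ univ.filter (fun j => Alive i j), (if j = Jx i then c * w i else 0) := by
      simp only [ht'_def, Finset.sum_add_distrib]
    rw [hsplit, ht_tot i, Finset.sum_ite_eq' _ (Jx i) (fun _ => c * w i),
      if_pos (by simpa using halive i), htarget i]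
end

section
/- (Intermediate claim in the proof of Lemma 3.) Let <J,I,v> be a critical instance of the Work Assignment Problem, let 0<ε<v, and let G' be the corresponding graph of <J,I,v−ε>. Then every minimum (s,t)-cut of G' has capacity strictly less than Σ_{i=1}^n w_i/(v−ε); consequently no minimum (s,t)-cut of G' contains all the edges (s,x_i), and for every maximum flow of G' at least one edge (s,x_i) is not saturated. -/
open Finset

/-- The nodes of the corresponding graph of a WAP instance: a source `src`,
one node `x i` per job, one node `y j` per interval, and a sink `sink`. -/
inductive Node (n L : ℕ) where
  | src : Node n L
  | x : Fin n → Node n L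
  | y : Fin L → Node n L
  | sink : Node n L
  deriving DecidableEq, Fintype

/-- The capacities of the corresponding graph of the WAP instance `⟨J, I, v⟩`:
`cap src (x i) = w i / v`, `cap (x i) (y j) = |I j|` when `i` is alive in `j`,
`cap (y j) sink = m j * |I j|`, and `0` on all other (non-)edges. -/
noncomputable def cap {n L : ℕ} (w : Fin n → ℝ) (len : Fin L → ℝ) (mj : Fin L → ℕ)
    (Alive : Fin n → Fin L → Bool) (v : ℝ) : Node n L → Node n L → ℝ
  | .src, .x i => w i / v
  | .x i, .y j => if Alive i j then len j else 0
  | .y j, .sink => (mj j : ℝ) * len j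
  | _, _ => 0

section Aux

variable {V : Type*} [Fintype V] [DecidableEq V]

/-- steps of a path -/
def dsteps : V → List V → List (V × V)
  | _, [] => []
  | a, b :: l => (a, b) :: dsteps b l

lemma dsteps_length (a : V) (l : List V) : (dsteps a l).length = l.length := by
  induction l generalizing a with
  | nil => rfl
  | cons b l ih => simp [dsteps, ih]

lemma dsteps_res {r : V → V → Prop} {a : V} {l : List V} (h : List.Chain r a l) :
    ∀ e ∈ dsteps a l, r e.1 e.2 := by
  induction l generalizing a with
  | nil => simp [dsteps]
  | cons b l ih =>
    obtain ⟨hab, hl⟩ := List.isChain_cons_cons.1 h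
    intro e he
    rcases List.mem_cons.1 he with rfl | he
    · exact hab
    · exact ih hl e he

lemma dsteps_tele (φ : V → ℝ) (a : V) (l : List V) :
    ((dsteps a l).map (fun e => φ e.2 - φ e.1)).sum
      = φ ((a :: l).getLast (List.cons_ne_nil _ _)) - φ a := by
  induction l generalizing a with
  | nil => simp [dsteps]
  | cons b l ih =>
    simp only [dsteps, List.map_cons, List.sum_cons, ih b, List.getLast_cons_cons]
    ring

lemma sum_map_sub {α : Type*} (l : List α) (F G : α → ℝ) :
    (l.map F).sum - (l.map G).sum = (l.map fun e => F e - G e).sum := by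
  induction l with
  | nil => simp
  | cons e l ih => simp only [List.map_cons, List.sum_cons]; linarith

lemma sum_list_swap {α : Type*} (l : List α) (F : α → V → ℝ) :
    ∑ u, (l.map fun e => F e u).sum = (l.map fun e => ∑ u, F e u).sum := by
  induction l with
  | nil => simp
  | cons e l ih => simp [Finset.sum_add_distrib, ih]

end Aux

set_option linter.unusedSectionVars false

section Augment
variable {V : Type*} [Fintype V] [DecidableEq V]

lemma no_augment (c f : V → V → ℝ) (s t : V) (hst : s ≠ t)
    (hf : IsMaxFlow c f s t)
    (h : Relation.ReflTransGen (fun u v => f u v < c u v ∨ 0 < f v u) s t) : False := by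
  set Res : V → V → Prop := fun u v => f u v < c u v ∨ 0 < f v u with hRes
  obtain ⟨l, hchain, hlast⟩ := List.exists_isChain_cons_of_relationReflTransGen h
  have hlne : l ≠ [] := by
    rintro rfl
    exact hst (by simpa using hlast)
  set steps : List (V × V) := dsteps s l with hsteps
  have hsne : steps ≠ [] := by
    cases l with
    | nil => exact absurd rfl hlne
    | cons b l => simp [hsteps, dsteps]
  have hres : ∀ e ∈ steps, Res e.1 e.2 := dsteps_res hchain
  -- margin
  set margin : V × V → ℝ := fun e =>
    if f e.1 e.2 < c e.1 e.2 then c e.1 e.2 - f e.1 e.2 else f e.2 e.1 with hmargin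
  have hmarginpos : ∀ e ∈ steps, 0 < margin e := by
    intro e he
    rcases hres e he with hlt | hpos
    · simp [hmargin, hlt]
    · by_cases hfc : f e.1 e.2 < c e.1 e.2 <;> simp [hmargin, hfc, hpos, sub_pos]
  have hne : (steps.toFinset.image margin).Nonempty := by
    obtain ⟨e, he⟩ := List.exists_mem_of_ne_nil steps hsne
    exact ⟨margin e, Finset.mem_image_of_mem _ (List.mem_toFinset.2 he)⟩
  set m : ℝ := (steps.toFinset.image margin).min' hne with hm
  have hmpos : 0 < m := by
    obtain ⟨e, he, hme⟩ := Finset.mem_image.1 ((steps.toFinset.image margin).min'_mem hne)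
    rw [hm, ← hme]
    exact hmarginpos e (List.mem_toFinset.1 he)
  have hmle : ∀ e ∈ steps, m ≤ margin e := fun e he =>
    Finset.min'_le _ _ (Finset.mem_image_of_mem _ (List.mem_toFinset.2 he))
  set k : ℕ := steps.length with hk
  have hkpos : 0 < (k : ℝ) := by
    have : steps.length ≠ 0 := fun h0 => hsne (List.length_eq_zero_iff.1 h0)
    positivity
  set δ : ℝ := m / k with hδ
  have hδpos : 0 < δ := div_pos hmpos hkpos
  set upd : (V × V) → V → V → ℝ := fun e u v =>
    if f e.1 e.2 < c e.1 e.2 then (if (u, v) = e then 1 else 0)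
    else (if (u, v) = (e.2, e.1) then (-1 : ℝ) else 0) with hupd
  set g : V → V → ℝ := fun u v => f u v + δ * (steps.map (fun e => upd e u v)).sum with hg
  have hubd : ∀ e u v, upd e u v ≤ 1 := by
    intro e u v
    simp only [hupd]
    split <;> split <;> norm_num
  have hlbd : ∀ e u v, -1 ≤ upd e u v := by
    intro e u v
    simp only [hupd]
    split <;> split <;> norm_num
  have hsum_ub : ∀ u v, (steps.map (fun e => upd e u v)).sum ≤ k := by
    intro u v
    calc (steps.map (fun e => upd e u v)).sum ≤ (steps.map (fun _ => (1:ℝ))).sum := by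
          apply List.sum_le_sum
          intro e he; exact hubd e u v
      _ = k := by simp [List.map_const', hk]
  have hsum_lb : ∀ u v, -(k:ℝ) ≤ (steps.map (fun e => upd e u v)).sum := by
    intro u v
    calc -(k:ℝ) = (steps.map (fun _ => (-1:ℝ))).sum := by simp [List.map_const', hk]
      _ ≤ (steps.map (fun e => upd e u v)).sum := by
          apply List.sum_le_sum
          intro e he; exact hlbd e u v
  have hδk : δ * k = m := by rw [hδ, div_mul_cancel₀ m hkpos.ne']
  -- nonnegativity of g
  have hgnn : ∀ u v, 0 ≤ g u v := by
    intro u v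
    rcases le_or_gt 0 ((steps.map (fun e => upd e u v)).sum) with hS | hS
    · have := hf.1.1 u v
      have : 0 ≤ δ * (steps.map (fun e => upd e u v)).sum := by positivity
      simp only [hg]; linarith [hf.1.1 u v]
    · -- some step contributes -1 at (u,v)
      have : ∃ e ∈ steps, upd e u v < 0 := by
        by_contra hno
        push_neg at hno
        have : 0 ≤ (steps.map (fun e => upd e u v)).sum :=
          List.sum_nonneg (by
            intro x hx
            obtain ⟨e, he, rfl⟩ := List.mem_map.1 hx
            exact hno e he)
        linarith
      obtain ⟨e, he, heneg⟩ := this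
      have hmuv : m ≤ f u v := by
        have : upd e u v = -1 ∧ ¬ f e.1 e.2 < c e.1 e.2 ∧ (u,v) = (e.2, e.1) := by
          simp only [hupd] at heneg ⊢
          split at heneg
          · split at heneg <;> norm_num at heneg
          · split at heneg
            · refine ⟨by simp_all, by assumption, by assumption⟩
            · norm_num at heneg
        obtain ⟨_, hfc, huv⟩ := this
        have h1 : margin e = f e.2 e.1 := by simp [hmargin, hfc]
        have h2 : (u, v) = (e.2, e.1) := huv
        have : u = e.2 ∧ v = e.1 := Prod.mk.injEq .. ▸ Prod.ext_iff.1 h2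
        obtain ⟨rfl, rfl⟩ := this
        exact h1 ▸ hmle e he
      have : δ * (steps.map (fun e => upd e u v)).sum ≥ δ * (-(k:ℝ)) :=
        mul_le_mul_of_nonneg_left (hsum_lb u v) hδpos.le
      simp only [hg]
      have : δ * (-(k:ℝ)) = -m := by rw [mul_neg, hδk]
      nlinarith [mul_le_mul_of_nonneg_left (hsum_lb u v) hδpos.le]
  -- capacity of g
  have hgc : ∀ u v, g u v ≤ c u v := by
    intro u v
    rcases le_or_gt ((steps.map (fun e => upd e u v)).sum) 0 with hS | hS
    · have : δ * (steps.map (fun e => upd e u v)).sum ≤ 0 :=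
        mul_nonpos_of_nonneg_of_nonpos hδpos.le hS
      simp only [hg]; linarith [hf.1.2.1 u v]
    · have : ∃ e ∈ steps, 0 < upd e u v := by
        by_contra hno
        push_neg at hno
        have h0 : (steps.map (fun e => upd e u v)).sum ≤ (steps.map (fun _ => (0:ℝ))).sum :=
          List.sum_le_sum (fun e he => hno e he)
        simp at h0
        linarith
      obtain ⟨e, he, hepos⟩ := this
      have hmuv : m ≤ c u v - f u v := by
        have : f e.1 e.2 < c e.1 e.2 ∧ (u,v) = e := by
          simp only [hupd] at hepos
          split at hepos
          · split at hepos
            · exact ⟨by assumption, by assumption⟩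
            · norm_num at hepos
          · split at hepos <;> norm_num at hepos
        obtain ⟨hfc, huv⟩ := this
        have h1 : margin e = c e.1 e.2 - f e.1 e.2 := by simp [hmargin, hfc]
        obtain ⟨rfl, rfl⟩ : u = e.1 ∧ v = e.2 := Prod.ext_iff.1 huv
        exact h1 ▸ hmle e he
      have h2 : δ * (steps.map (fun e => upd e u v)).sum ≤ δ * k :=
        mul_le_mul_of_nonneg_left (hsum_ub u v) hδpos.le
      simp only [hg]
      nlinarith
  -- net flow change at each node
  have hnet : ∀ v : V, (∑ u, g u v) - (∑ u, g v u)
      = (∑ u, f u v) - (∑ u, f v u)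
        + δ * ((if v = t then (1:ℝ) else 0) - (if v = s then (1:ℝ) else 0)) := by
    intro v
    have key : ∀ e : V × V, (∑ u, upd e u v) - (∑ u, upd e v u)
        = (if v = e.2 then (1:ℝ) else 0) - (if v = e.1 then (1:ℝ) else 0) := by
      rintro ⟨a, b⟩
      have e1 : ∀ x y : V, (∑ u, if u = x ∧ v = y then (1:ℝ) else 0)
          = if v = y then 1 else 0 := by
        intro x y
        by_cases h2 : v = y <;> simp [h2]
      have e2 : ∀ x y : V, (∑ u, if v = x ∧ u = y then (1:ℝ) else 0)
          = if v = x then 1 else 0 := by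
        intro x y
        by_cases h2 : v = x <;> simp [h2]
      have e3 : ∀ x y : V, (∑ u, if u = x ∧ v = y then (-1:ℝ) else 0)
          = if v = y then -1 else 0 := by
        intro x y
        by_cases h2 : v = y <;> simp [h2]
      have e4 : ∀ x y : V, (∑ u, if v = x ∧ u = y then (-1:ℝ) else 0)
          = if v = x then -1 else 0 := by
        intro x y
        by_cases h2 : v = x <;> simp [h2]
      by_cases hfc : f (a, b).1 (a, b).2 < c (a, b).1 (a, b).2
      · simp only [hupd, if_pos hfc, Prod.mk.injEq, e1, e2]
      · simp only [hupd, if_neg hfc, Prod.mk.injEq, e3, e4]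
        by_cases h1 : v = a <;> by_cases h2 : v = b
        · have hab : a = b := h1.symm.trans h2
          simp [h1, h2, hab]
        · have hab : ¬ a = b := fun hh => h2 (h1.trans hh)
          have hba : ¬ b = a := fun hh => hab hh.symm
          simp [h1, h2, hab, hba]
        · have hba : ¬ b = a := fun hh => h1 (h2.trans hh)
          have hab : ¬ a = b := fun hh => hba hh.symm
          simp [h1, h2, hab, hba]
        · simp [h1, h2]
    have h1 : ∑ u, g u v = (∑ u, f u v) + δ * (steps.map (fun e => ∑ u, upd e u v)).sum := by
      simp only [hg, Finset.sum_add_distrib, ← Finset.mul_sum, sum_list_swap]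
    have h2 : ∑ u, g v u = (∑ u, f v u) + δ * (steps.map (fun e => ∑ u, upd e v u)).sum := by
      simp only [hg, Finset.sum_add_distrib, ← Finset.mul_sum, sum_list_swap]
    have h3 : (steps.map (fun e => ∑ u, upd e u v)).sum
        - (steps.map (fun e => ∑ u, upd e v u)).sum
        = (steps.map (fun e => (if v = e.2 then (1:ℝ) else 0)
            - (if v = e.1 then (1:ℝ) else 0))).sum := by
      rw [sum_map_sub]
      exact congrArg List.sum (List.map_congr_left (fun e _ => key e))
    have h4 := dsteps_tele (fun x => if v = x then (1:ℝ) else 0) s l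
    rw [hlast] at h4
    rw [h1, h2]
    have : (steps.map (fun e => ∑ u, upd e u v)).sum
        - (steps.map (fun e => ∑ u, upd e v u)).sum
        = (if v = t then (1:ℝ) else 0) - (if v = s then (1:ℝ) else 0) := by
      rw [h3, hsteps]
      exact h4
    rw [← this]
    ring
  -- g is a flow
  have hgflow : IsFlow c g s t := by
    refine ⟨hgnn, hgc, fun v hvs hvt => ?_⟩
    have h := hnet v
    rw [if_neg hvt, if_neg hvs, hf.1.2.2 v hvs hvt] at h
    simp at h
    linarith
  have hval : flowValue g s = flowValue f s + δ := by
    have h := hnet s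
    rw [if_neg hst, if_pos rfl] at h
    simp only [flowValue]
    linarith
  have := hf.2 g hgflow
  rw [hval] at this
  linarith

lemma exists_maxFlow (c : V → V → ℝ) (hc : ∀ u v, 0 ≤ c u v) (s t : V) :
    ∃ f, IsMaxFlow c f s t := by
  set S : Set (V → V → ℝ) := {f | IsFlow c f s t} with hS
  have hne : S.Nonempty := by
    refine ⟨fun _ _ => 0, fun u v => le_refl 0, fun u v => hc u v, fun v _ _ => rfl⟩
  have hA : IsCompact {f : V → V → ℝ | ∀ u v, f u v ∈ Set.Icc 0 (c u v)} := by
    have : {f : V → V → ℝ | ∀ u v, f u v ∈ Set.Icc 0 (c u v)}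
        = Set.univ.pi (fun u => Set.univ.pi (fun v => Set.Icc 0 (c u v))) := by
      ext f
      simp [Set.mem_pi, Set.mem_Icc, Pi.le_def, forall_and]
    rw [this]
    exact isCompact_univ_pi (fun u => isCompact_univ_pi (fun v => isCompact_Icc))
  have hB : IsClosed {f : V → V → ℝ |
      ∀ v, v ≠ s → v ≠ t → ∑ u, f u v = ∑ u, f v u} := by
    have : {f : V → V → ℝ | ∀ v, v ≠ s → v ≠ t → ∑ u, f u v = ∑ u, f v u}
        = ⋂ v, {f : V → V → ℝ | v ≠ s → v ≠ t → ∑ u, f u v = ∑ u, f v u} := by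
      ext f; simp
    rw [this]
    refine isClosed_iInter (fun v => ?_)
    by_cases hvs : v = s
    · simp [hvs]
    by_cases hvt : v = t
    · have : {f : V → V → ℝ | v ≠ s → v ≠ t → ∑ u, f u v = ∑ u, f v u} = Set.univ := by
        ext f; simp [hvt]
      rw [this]; exact isClosed_univ
    have : {f : V → V → ℝ | v ≠ s → v ≠ t → ∑ u, f u v = ∑ u, f v u}
        = {f : V → V → ℝ | ∑ u, f u v = ∑ u, f v u} := by
      ext f; simp [hvs, hvt]
    rw [this]
    exact isClosed_eq
      (continuous_finset_sum _ fun u _ => (continuous_apply v).comp (continuous_apply u))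
      (continuous_finset_sum _ fun u _ => (continuous_apply u).comp (continuous_apply v))
  have hScomp : IsCompact S := by
    have hsub : S = {f : V → V → ℝ | ∀ u v, f u v ∈ Set.Icc 0 (c u v)} ∩
        {f : V → V → ℝ | ∀ v, v ≠ s → v ≠ t → ∑ u, f u v = ∑ u, f v u} := by
      ext f
      constructor
      · rintro ⟨h1, h2, h3⟩
        exact ⟨fun u v => ⟨h1 u v, h2 u v⟩, h3⟩
      · rintro ⟨h1, h2⟩
        exact ⟨fun u v => (h1 u v).1, fun u v => (h1 u v).2, h2⟩
    rw [hsub]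
    exact hA.inter_right hB
  have hcont : ContinuousOn (fun f : V → V → ℝ => flowValue f s) S := by
    apply Continuous.continuousOn
    apply Continuous.sub
    · exact continuous_finset_sum _ fun u _ => (continuous_apply u).comp (continuous_apply s)
    · exact continuous_finset_sum _ fun u _ => (continuous_apply s).comp (continuous_apply u)
  obtain ⟨f, hfS, hmax⟩ := hScomp.exists_isMaxOn hne hcont
  exact ⟨f, hfS, fun g hg => hmax hg⟩

lemma maxFlow_cut (c : V → V → ℝ) (s t : V) (hst : s ≠ t)
    (f : V → V → ℝ) (hf : IsMaxFlow c f s t) :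
    ∃ X : Finset V, IsCut X s t ∧ cutCap c X = flowValue f s := by
  classical
  set Res : V → V → Prop := fun u v => f u v < c u v ∨ 0 < f v u with hRes
  set X : Finset V := Finset.univ.filter (fun v => Relation.ReflTransGen Res s v) with hX
  have hsX : s ∈ X := Finset.mem_filter.2 ⟨Finset.mem_univ _, Relation.ReflTransGen.refl⟩
  have htX : t ∉ X := by
    intro ht
    exact no_augment c f s t hst hf (Finset.mem_filter.1 ht).2
  have hsat : ∀ u ∈ X, ∀ v ∈ Xᶜ, f u v = c u v ∧ f v u = 0 := by
    intro u hu v hv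
    have hvr : ¬ Relation.ReflTransGen Res s v := by
      intro hr
      exact (Finset.mem_compl.1 hv) (Finset.mem_filter.2 ⟨Finset.mem_univ _, hr⟩)
    have hnr : ¬ Res u v := by
      intro hr
      exact hvr ((Finset.mem_filter.1 hu).2.tail hr)
    have hnr' : ¬ (f u v < c u v ∨ 0 < f v u) := hnr
    push_neg at hnr'
    exact ⟨le_antisymm (hf.1.2.1 u v) hnr'.1, le_antisymm hnr'.2 (hf.1.1 v u)⟩
  refine ⟨X, ⟨hsX, htX⟩, ?_⟩
  have hval : flowValue f s = ∑ v ∈ X, ((∑ u, f v u) - (∑ u, f u v)) := by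
    rw [Finset.sum_eq_single s]
    · rfl
    · intro v hv hvs
      have hvt : v ≠ t := fun h => htX (h ▸ hv)
      rw [hf.1.2.2 v hvs hvt]
      ring
    · intro h
      exact absurd hsX h
  have hsplit : ∀ v : V, ∀ h : V → ℝ, (∑ u, h u) = (∑ u ∈ X, h u) + ∑ u ∈ Xᶜ, h u :=
    fun v h => (Finset.sum_add_sum_compl X h).symm
  have : flowValue f s = (∑ v ∈ X, ∑ u ∈ Xᶜ, f v u) - (∑ v ∈ X, ∑ u ∈ Xᶜ, f u v) := by
    rw [hval]
    have e1 : ∀ v ∈ X, (∑ u, f v u) - (∑ u, f u v)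
        = ((∑ u ∈ X, f v u) - (∑ u ∈ X, f u v))
          + ((∑ u ∈ Xᶜ, f v u) - (∑ u ∈ Xᶜ, f u v)) := by
      intro v _
      rw [hsplit v (fun u => f v u), hsplit v (fun u => f u v)]
      ring
    rw [Finset.sum_congr rfl e1, Finset.sum_add_distrib, Finset.sum_sub_distrib,
      Finset.sum_sub_distrib, Finset.sum_comm (s := X) (t := X) (f := fun v u => f v u)]
    ring
  rw [this]
  have hz : (∑ v ∈ X, ∑ u ∈ Xᶜ, f u v) = 0 :=
    Finset.sum_eq_zero fun v hv => Finset.sum_eq_zero fun u hu => (hsat v hv u hu).2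
  have hcc : (∑ v ∈ X, ∑ u ∈ Xᶜ, f v u) = cutCap c X :=
    Finset.sum_congr rfl fun v hv => Finset.sum_congr rfl fun u hu => (hsat v hv u hu).1
  rw [hz, hcc]
  ring

end Augment

def nodeEquiv (n L : ℕ) : Node n L ≃ (Unit ⊕ Fin n ⊕ Fin L ⊕ Unit) where
  toFun u := match u with
    | .src => .inl ()
    | .x i => .inr (.inl i)
    | .y j => .inr (.inr (.inl j))
    | .sink => .inr (.inr (.inr ()))
  invFun z := match z with
    | .inl _ => .src
    | .inr (.inl i) => .x i
    | .inr (.inr (.inl j)) => .y j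
    | .inr (.inr (.inr _)) => .sink
  left_inv := by rintro (_|_|_|_) <;> rfl
  right_inv := by rintro (_|(_|(_|_))) <;> rfl

lemma node_sum {n L : ℕ} (φ : Node n L → ℝ) :
    ∑ u, φ u = φ .src + (∑ i, φ (.x i)) + (∑ j, φ (.y j)) + φ .sink := by
  rw [← Equiv.sum_comp (nodeEquiv n L).symm φ]
  simp [Fintype.sum_sum_type, nodeEquiv]
  ring

section App
variable {n L : ℕ} (w : Fin n → ℝ) (len : Fin L → ℝ) (mj : Fin L → ℕ)
  (Alive : Fin n → Fin L → Bool) (v' : ℝ)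

lemma cap_src_x (i : Fin n) : cap w len mj Alive v' .src (.x i) = w i / v' := rfl
lemma cap_x_y (i : Fin n) (j : Fin L) :
    cap w len mj Alive v' (.x i) (.y j) = if Alive i j then len j else 0 := rfl
lemma cap_y_sink (j : Fin L) : cap w len mj Alive v' (.y j) .sink = (mj j : ℝ) * len j := rfl
example (i : Fin n) : cap w len mj Alive v' (.x i) .src = 0 := rfl
example : cap w len mj Alive v' .src .src = 0 := rfl
example (j : Fin L) : cap w len mj Alive v' .src (.y j) = 0 := rfl

end App

section App2
variable {n L : ℕ} {w : Fin n → ℝ} {len : Fin L → ℝ} {mj : Fin L → ℕ}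
  {Alive : Fin n → Fin L → Bool} {v' : ℝ}

lemma cap_nonneg (hw : ∀ i, 0 ≤ w i) (hlen : ∀ j, 0 ≤ len j) (hv : 0 < v') :
    ∀ u z, 0 ≤ cap w len mj Alive v' u z := by
  intro u z
  cases u <;> cases z <;> simp [cap]
  · exact div_nonneg (hw _) hv.le
  · split <;> [exact hlen _; exact le_refl 0]
  · exact mul_nonneg (Nat.cast_nonneg _) (hlen _)

lemma flow_saturated_feasible (hlen : ∀ j, 0 ≤ len j)
    (f : Node n L → Node n L → ℝ)
    (hf : IsFlow (cap w len mj Alive v') f .src .sink)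
    (hsat : ∀ i, f .src (.x i) = w i / v') : WFeasible w len mj Alive v' := by
  obtain ⟨hnn, hle, hcons⟩ := hf
  have hzero : ∀ u z, cap w len mj Alive v' u z = 0 → f u z = 0 :=
    fun u z h => le_antisymm (h ▸ hle u z) (hnn u z)
  refine ⟨fun i j => f (.x i) (.y j), ?_, ?_, ?_, ?_, ?_⟩
  · exact fun i j => hnn _ _
  · intro i j hA
    apply hzero
    simp [cap, hA]
  · intro i j
    refine le_trans (hle _ _) ?_
    rw [cap_x_y]
    split <;> [exact le_refl _; exact hlen j]
  · intro j
    have hc := hcons (.y j) (by simp) (by simp)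
    have hin : ∑ u, f u (.y j) = ∑ i, f (.x i) (.y j) := by
      rw [node_sum (fun u => f u (.y j))]
      rw [hzero .src (.y j) rfl, hzero .sink (.y j) rfl,
        Finset.sum_eq_zero (fun j' _ => hzero (.y j') (.y j) rfl)]
      ring
    have hout : ∑ u, f (.y j) u = f (.y j) .sink := by
      rw [node_sum (fun u => f (.y j) u)]
      rw [hzero (.y j) .src rfl,
        Finset.sum_eq_zero (fun i _ => hzero (.y j) (.x i) rfl),
        Finset.sum_eq_zero (fun j' _ => hzero (.y j) (.y j') rfl)]
      ring
    have hfull : ∑ i ∈ univ.filter (fun i => Alive i j), f (.x i) (.y j)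
        = ∑ i, f (.x i) (.y j) := by
      apply Finset.sum_filter_of_ne
      intro i _ hne
      by_contra hA
      exact hne (hzero (.x i) (.y j) (by simp [cap, hA]))
    rw [hfull, ← hin, hc, hout]
    exact le_trans (hle _ _) (le_of_eq (cap_y_sink w len mj Alive v' j))
  · intro i
    have hc := hcons (.x i) (by simp) (by simp)
    have hin : ∑ u, f u (.x i) = w i / v' := by
      rw [node_sum (fun u => f u (.x i))]
      rw [hsat i, hzero .sink (.x i) rfl,
        Finset.sum_eq_zero (fun i' _ => hzero (.x i') (.x i) rfl),
        Finset.sum_eq_zero (fun j' _ => hzero (.y j') (.x i) rfl)]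
      simp [cap]
    have hout : ∑ u, f (.x i) u = ∑ j, f (.x i) (.y j) := by
      rw [node_sum (fun u => f (.x i) u)]
      rw [hzero (.x i) .src rfl, hzero (.x i) .sink rfl,
        Finset.sum_eq_zero (fun i' _ => hzero (.x i) (.x i') rfl)]
      ring
    have hfull : ∑ j ∈ univ.filter (fun j => Alive i j), f (.x i) (.y j)
        = ∑ j, f (.x i) (.y j) := by
      apply Finset.sum_filter_of_ne
      intro j _ hne
      by_contra hA
      exact hne (hzero (.x i) (.y j) (by simp [cap, hA]))
    rw [hfull, ← hout, ← hc, hin]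

end App2


lemma cutCap_src {n L : ℕ} (w : Fin n → ℝ) (len : Fin L → ℝ) (mj : Fin L → ℕ)
    (Alive : Fin n → Fin L → Bool) (v' : ℝ) :
    cutCap (cap w len mj Alive v') {Node.src} = ∑ i, w i / v' := by
  have hsplit := Finset.sum_add_sum_compl ({Node.src} : Finset (Node n L))
    (fun u => cap w len mj Alive v' .src u)
  have huniv : ∑ u, cap w len mj Alive v' .src u = ∑ i, w i / v' := by
    rw [node_sum (fun u => cap w len mj Alive v' .src u)]
    simp [cap]
  have hsing : ∑ u ∈ ({Node.src} : Finset (Node n L)), cap w len mj Alive v' .src u = 0 := by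
    simp [cap]
  have : cutCap (cap w len mj Alive v') {Node.src}
      = ∑ u ∈ ({Node.src} : Finset (Node n L))ᶜ, cap w len mj Alive v' .src u := by
    simp [cutCap]
  rw [this]
  linarith

/-- (Intermediate claim in the proof of Lemma 3.) Let `⟨J, I, v⟩` be a critical
WAP instance, `0 < ε < v`, and `G'` the corresponding graph of `⟨J, I, v - ε⟩`.
Then every minimum `(s,t)`-cut of `G'` has capacity strictly less than
`∑ i, w i / (v - ε)`; consequently no minimum `(s,t)`-cut contains all the edges
`(s, x i)` (i.e. every minimum cut has some `x i` on its source side), and every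
maximum flow leaves some edge `(s, x i)` unsaturated. -/
theorem min_cut_of_shrunk_instance {n L : ℕ} (w : Fin n → ℝ) (len : Fin L → ℝ)
    (mj : Fin L → ℕ) (Alive : Fin n → Fin L → Bool) (v ε : ℝ)
    (hw : ∀ i, 0 < w i) (hlen : ∀ j, 0 < len j) (hmj : ∀ j, 1 ≤ mj j)
    (hε : 0 < ε) (hεv : ε < v)
    (hcrit : CriticalInstance w len mj Alive v) :
    (∀ X : Finset (Node n L),
        IsMinCut (cap w len mj Alive (v - ε)) X Node.src Node.sink →
        cutCap (cap w len mj Alive (v - ε)) X < ∑ i, w i / (v - ε)) ∧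
    (∀ X : Finset (Node n L),
        IsMinCut (cap w len mj Alive (v - ε)) X Node.src Node.sink →
        ∃ i : Fin n, Node.x i ∈ X) ∧
    (∀ f, IsMaxFlow (cap w len mj Alive (v - ε)) f Node.src Node.sink →
        ∃ i : Fin n, f Node.src (Node.x i) < w i / (v - ε)) := by
  have hvpos : 0 < v - ε := by linarith
  have hvlt : v - ε < v := by linarith
  have hinfeas : ¬ WFeasible w len mj Alive (v - ε) := hcrit.2 (v - ε) hvpos hvlt
  set c : Node n L → Node n L → ℝ := cap w len mj Alive (v - ε) with hc
  have hcnn : ∀ u z, 0 ≤ c u z :=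
    cap_nonneg (fun i => (hw i).le) (fun j => (hlen j).le) hvpos
  have hcut_src : IsCut ({Node.src} : Finset (Node n L)) Node.src Node.sink :=
    ⟨Finset.mem_singleton_self _, by simp⟩
  have hcapsum : ∑ u, c Node.src u = ∑ i, w i / (v - ε) := by
    rw [hc, node_sum (fun u => cap w len mj Alive (v - ε) .src u)]
    simp [cap]
  -- Part 1
  have part1 : ∀ X : Finset (Node n L),
      IsMinCut (cap w len mj Alive (v - ε)) X Node.src Node.sink →
      cutCap (cap w len mj Alive (v - ε)) X < ∑ i, w i / (v - ε) := by
    intro X hX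
    have hle : cutCap c X ≤ ∑ i, w i / (v - ε) := by
      have h := hX.2 {Node.src} hcut_src
      rwa [← hc, cutCap_src] at h
    rcases eq_or_lt_of_le hle with heq | hlt
    · exfalso
      obtain ⟨f, hfmax⟩ := exists_maxFlow c hcnn Node.src Node.sink
      obtain ⟨Xr, hXr, hXrval⟩ := maxFlow_cut c Node.src Node.sink (by simp) f hfmax
      have h1 : (∑ i, w i / (v - ε)) ≤ flowValue f Node.src := by
        rw [← hXrval, ← heq]
        exact hX.2 Xr hXr
      have hA : ∑ u, f Node.src u ≤ ∑ u, c Node.src u :=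
        Finset.sum_le_sum (fun u _ => hfmax.1.2.1 _ _)
      have hB : 0 ≤ ∑ u, f u Node.src :=
        Finset.sum_nonneg (fun u _ => hfmax.1.1 _ _)
      have hval : flowValue f Node.src = (∑ u, f Node.src u) - (∑ u, f u Node.src) := rfl
      have hsat : ∀ u, f Node.src u = c Node.src u := by
        intro u
        by_contra hne
        have hltu : f Node.src u < c Node.src u :=
          lt_of_le_of_ne (hfmax.1.2.1 _ _) hne
        have hstrict : ∑ z, f Node.src z < ∑ z, c Node.src z :=
          Finset.sum_lt_sum (fun z _ => hfmax.1.2.1 _ _) ⟨u, Finset.mem_univ _, hltu⟩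
        rw [hcapsum] at hstrict
        linarith
      exact hinfeas (flow_saturated_feasible (fun j => (hlen j).le) f hfmax.1
        (fun i => by rw [hsat (Node.x i)]; rfl))
    · exact hlt
  refine ⟨part1, ?_, ?_⟩
  -- Part 2
  · intro X hX
    by_contra hno
    push_neg at hno
    have h1 := part1 X hX
    have hsrc : Node.src ∈ X := hX.1.1
    have himg : (Finset.univ.image (Node.x : Fin n → Node n L)) ⊆ Xᶜ := by
      intro u hu
      obtain ⟨i, _, rfl⟩ := Finset.mem_image.1 hu
      exact Finset.mem_compl.2 (hno i)
    have h2 : ∑ i, w i / (v - ε) ≤ ∑ u ∈ Xᶜ, c Node.src u := by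
      have hi : ∑ i, w i / (v - ε)
          = ∑ u ∈ Finset.univ.image (Node.x : Fin n → Node n L), c Node.src u := by
        rw [Finset.sum_image (fun i _ i' _ h => by injection h)]
        rfl
      rw [hi]
      exact Finset.sum_le_sum_of_subset_of_nonneg himg (fun u _ _ => hcnn _ _)
    have h3 : ∑ u ∈ Xᶜ, c Node.src u ≤ cutCap c X :=
      Finset.single_le_sum (f := fun u => ∑ z ∈ Xᶜ, c u z)
        (fun u _ => Finset.sum_nonneg fun z _ => hcnn u z) hsrc
    rw [← hc] at h1
    linarith
  -- Part 3
  · intro f hfmax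
    by_contra hno
    push_neg at hno
    have hsat : ∀ i, f Node.src (Node.x i) = w i / (v - ε) := fun i =>
      le_antisymm (hfmax.1.2.1 Node.src (Node.x i)) (hno i)
    exact absurd (flow_saturated_feasible (fun j => (hlen j).le) f hfmax.1 hsat) hinfeas
end
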